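/- For every 7-uniform hypergraph H with n vertices and m edges, τ(H) ≤ (18400/96050)·(n + m); equivalently the Tuza constant c₇ satisfies c₇ ≤ 18400/96050 < 0.1916. -/
import Mathlib


variable {α : Type*} [DecidableEq α]

/-- A transversal of an edge set: meets every edge. -/
def IsTransversal (E : Finset (Finset α)) (T : Finset α) : Prop :=
  ∀ e ∈ E, (e ∩ T).Nonempty

/-- Transversal number: minimum cardinality of a transversal. -/
noncomputable def tau (E : Finset (Finset α)) : ℕ :=
  sInf {n | ∃ T : Finset α, T.card = n ∧ IsTransversal E T}

/-- Degree of a vertex: number of edges containing it. -/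
def degree (E : Finset (Finset α)) (v : α) : ℕ :=
  (E.filter (fun e => v ∈ e)).card

/-- Neighborhood of a vertex. -/
def nbhd (E : Finset (Finset α)) (v : α) : Finset α :=
  ((E.filter (fun e => v ∈ e)).biUnion id).erase v

lemma tau_le (E : Finset (Finset α)) (T : Finset α) (h : IsTransversal E T) :
    tau E ≤ T.card := Nat.sInf_le ⟨T, rfl, h⟩

lemma tau_spec (E : Finset (Finset α)) (h : ∀ e ∈ E, e.Nonempty) :
    ∃ T : Finset α, T.card = tau E ∧ IsTransversal E T := by
  have hne : {n | ∃ T : Finset α, T.card = n ∧ IsTransversal E T}.Nonempty := by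
    refine ⟨(E.biUnion id).card, E.biUnion id, rfl, fun e he => ?_⟩
    have hsub : e ⊆ E.biUnion id := Finset.subset_biUnion_of_mem id he
    rw [Finset.inter_eq_left.mpr hsub]
    exact h e he
  exact Nat.sInf_mem hne

lemma tau_empty : tau (∅ : Finset (Finset α)) = 0 :=
  Nat.le_zero.mp (by simpa using tau_le ∅ ∅ (fun e he => by simp at he))

lemma tau_step (E : Finset (Finset α)) (v : α) (h : ∀ e ∈ E, e.Nonempty) :
    tau E ≤ tau (E.filter (fun e => v ∉ e)) + 1 := by
  obtain ⟨T', hc, hT'⟩ := tau_spec (E.filter (fun e => v ∉ e))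
    (fun e he => h e (Finset.mem_filter.mp he).1)
  have htr : IsTransversal E (insert v T') := by
    intro e he
    by_cases hv : v ∈ e
    · exact ⟨v, Finset.mem_inter.mpr ⟨hv, Finset.mem_insert_self _ _⟩⟩
    · obtain ⟨x, hx⟩ := hT' e (Finset.mem_filter.mpr ⟨he, hv⟩)
      rw [Finset.mem_inter] at hx
      exact ⟨x, Finset.mem_inter.mpr ⟨hx.1, Finset.mem_insert_of_mem hx.2⟩⟩
  calc tau E ≤ (insert v T').card := tau_le _ _ htr
    _ ≤ T'.card + 1 := Finset.card_insert_le _ _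
    _ = tau (E.filter (fun e => v ∉ e)) + 1 := by rw [hc]

lemma degree_add_card (E : Finset (Finset α)) (v : α) :
    degree E v + (E.filter (fun e => v ∉ e)).card = E.card := by
  simpa [degree] using
    Finset.card_filter_add_card_filter_not (s := E) (p := fun e => v ∈ e)

lemma degree_filter_le (E : Finset (Finset α)) (v w : α) :
    degree (E.filter (fun e => v ∉ e)) w ≤ degree E w :=
  Finset.card_le_card (Finset.filter_subset_filter _ (Finset.filter_subset _ _))

lemma tau_le_card : ∀ (k : ℕ) (E : Finset (Finset α)), E.card ≤ k →
    (∀ e ∈ E, e.Nonempty) → tau E ≤ E.card := by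
  intro k
  induction k with
  | zero =>
    intro E hE _
    rw [Finset.card_eq_zero.mp (Nat.le_zero.mp hE)]
    simp [tau_empty]
  | succ k ih =>
    intro E hE hne
    rcases E.eq_empty_or_nonempty with rfl | ⟨e, he⟩
    · simp [tau_empty]
    · obtain ⟨v, hv⟩ := hne e he
      have hlt : (E.filter (fun e => v ∉ e)).card < E.card :=
        Finset.card_lt_card (Finset.filter_ssubset.mpr ⟨e, he, by simp [hv]⟩)
      have h1 := tau_step E v hne
      have h2 := ih (E.filter (fun e => v ∉ e)) (by omega)
        (fun f hf => hne f (Finset.mem_filter.mp hf).1)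
      omega

lemma mem_of_degree_pos {V : Finset α} {E : Finset (Finset α)} (hVE : ∀ e ∈ E, e ⊆ V)
    {v : α} (h : 0 < degree E v) : v ∈ V := by
  rw [degree, Finset.card_pos] at h
  obtain ⟨e, he⟩ := h
  rw [Finset.mem_filter] at he
  exact hVE e he.1 he.2

lemma sum_degree (V : Finset α) (E : Finset (Finset α)) (hVE : ∀ e ∈ E, e ⊆ V) :
    ∑ v ∈ V, degree E v = ∑ e ∈ E, e.card := by
  unfold degree
  calc ∑ v ∈ V, (E.filter (fun e => v ∈ e)).card
      = ∑ v ∈ V, ∑ e ∈ E, if v ∈ e then 1 else 0 := by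
        refine Finset.sum_congr rfl fun v _ => ?_
        rw [Finset.card_filter]
    _ = ∑ e ∈ E, ∑ v ∈ V, if v ∈ e then 1 else 0 := Finset.sum_comm
    _ = ∑ e ∈ E, e.card := by
        refine Finset.sum_congr rfl fun e he => ?_
        rw [← Finset.card_filter]
        congr 1
        rw [Finset.filter_mem_eq_inter]
        exact Finset.inter_eq_right.mpr (hVE e he)

lemma card_bound (V : Finset α) (E : Finset (Finset α)) (hVE : ∀ e ∈ E, e ⊆ V)
    (h7 : ∀ e ∈ E, e.card = 7) (D : ℕ) (hdeg : ∀ v, degree E v ≤ D) :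
    7 * E.card ≤ D * V.card := by
  have h1 : ∑ e ∈ E, e.card = 7 * E.card := by
    rw [Finset.sum_congr rfl h7, Finset.sum_const, smul_eq_mul, mul_comm]
  have h2 : ∑ v ∈ V, degree E v ≤ D * V.card := by
    calc ∑ v ∈ V, degree E v ≤ ∑ _v ∈ V, D := Finset.sum_le_sum (fun v _ => hdeg v)
      _ = D * V.card := by rw [Finset.sum_const, smul_eq_mul, mul_comm]
  rw [← h1, ← sum_degree V E hVE]
  exact h2

lemma edges_nonempty {E : Finset (Finset α)} (h7 : ∀ e ∈ E, e.card = 7) :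
    ∀ e ∈ E, e.Nonempty := fun e he =>
  Finset.card_pos.mp (by rw [h7 e he]; norm_num)

lemma bound2 : ∀ (k : ℕ) (V : Finset α) (E : Finset (Finset α)), V.card ≤ k →
    (∀ e ∈ E, e ⊆ V) → (∀ e ∈ E, e.card = 7) → (∀ v, degree E v ≤ 2) →
    (tau E : ℚ) ≤ 9/100 * V.card + 46/100 * E.card := by
  intro k
  induction k with
  | zero =>
    intro V E hVk hVE h7 _
    have hV : V = ∅ := Finset.card_eq_zero.mp (Nat.le_zero.mp hVk)
    have hE : E = ∅ := by
      rw [Finset.eq_empty_iff_forall_notMem]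
      intro e he
      have h77 := h7 e he
      have h0 : e = ∅ := Finset.subset_empty.mp (hV ▸ hVE e he)
      simp [h0] at h77
    simp [hV, hE, tau_empty]
  | succ k ih =>
    intro V E hVk hVE h7 hdeg
    by_cases hex : ∃ v, 2 ≤ degree E v
    · obtain ⟨v, hv⟩ := hex
      have hvV : v ∈ V := mem_of_degree_pos hVE (by omega)
      have hstep : tau E ≤ tau (E.filter (fun e => v ∉ e)) + 1 :=
        tau_step E v (edges_nonempty h7)
      have hIH : (tau (E.filter (fun e => v ∉ e)) : ℚ) ≤
          9/100 * (V.erase v).card + 46/100 * (E.filter (fun e => v ∉ e)).card := by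
        refine ih (V.erase v) _ ?_ ?_ ?_ ?_
        · have := Finset.card_erase_of_mem hvV
          omega
        · intro e he
          rw [Finset.mem_filter] at he
          exact Finset.subset_erase.mpr ⟨hVE e he.1, he.2⟩
        · intro e he
          exact h7 e (Finset.mem_filter.mp he).1
        · intro w
          exact le_trans (degree_filter_le E v w) (hdeg w)
      have hc1 : (degree E v : ℚ) + (E.filter (fun e => v ∉ e)).card = E.card := by
        exact_mod_cast degree_add_card E v
      have hc2 : ((V.erase v).card : ℚ) + 1 = V.card := by
        have h := Finset.card_erase_of_mem hvV
        have hpos : 1 ≤ V.card := Finset.card_pos.mpr ⟨v, hvV⟩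
        exact_mod_cast (by omega : (V.erase v).card + 1 = V.card)
      have hd : (2 : ℚ) ≤ degree E v := by exact_mod_cast hv
      have hstep' : (tau E : ℚ) ≤ (tau (E.filter (fun e => v ∉ e)) : ℚ) + 1 := by
        exact_mod_cast hstep
      linarith
    · push_neg at hex
      have hdeg1 : ∀ v, degree E v ≤ 1 := fun v => by have := hex v; omega
      have h7m : 7 * E.card ≤ 1 * V.card := card_bound V E hVE h7 1 hdeg1
      have htm : tau E ≤ E.card := tau_le_card E.card E le_rfl (edges_nonempty h7)
      have h7m' : 7 * (E.card : ℚ) ≤ V.card := by exact_mod_cast (by omega : 7 * E.card ≤ V.card)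
      have htm' : (tau E : ℚ) ≤ E.card := by exact_mod_cast htm
      linarith

lemma bound3 : ∀ (k : ℕ) (V : Finset α) (E : Finset (Finset α)), V.card ≤ k →
    (∀ e ∈ E, e ⊆ V) → (∀ e ∈ E, e.card = 7) → (∀ v, degree E v ≤ 3) →
    (tau E : ℚ) ≤ 14/100 * V.card + 29/100 * E.card := by
  intro k
  induction k with
  | zero =>
    intro V E hVk hVE h7 _
    have hV : V = ∅ := Finset.card_eq_zero.mp (Nat.le_zero.mp hVk)
    have hE : E = ∅ := by
      rw [Finset.eq_empty_iff_forall_notMem]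
      intro e he
      have h77 := h7 e he
      have h0 : e = ∅ := Finset.subset_empty.mp (hV ▸ hVE e he)
      simp [h0] at h77
    simp [hV, hE, tau_empty]
  | succ k ih =>
    intro V E hVk hVE h7 hdeg
    by_cases hex : ∃ v, 3 ≤ degree E v
    · obtain ⟨v, hv⟩ := hex
      have hvV : v ∈ V := mem_of_degree_pos hVE (by omega)
      have hstep : tau E ≤ tau (E.filter (fun e => v ∉ e)) + 1 :=
        tau_step E v (edges_nonempty h7)
      have hIH : (tau (E.filter (fun e => v ∉ e)) : ℚ) ≤
          14/100 * (V.erase v).card + 29/100 * (E.filter (fun e => v ∉ e)).card := by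
        refine ih (V.erase v) _ ?_ ?_ ?_ ?_
        · have := Finset.card_erase_of_mem hvV
          omega
        · intro e he
          rw [Finset.mem_filter] at he
          exact Finset.subset_erase.mpr ⟨hVE e he.1, he.2⟩
        · intro e he
          exact h7 e (Finset.mem_filter.mp he).1
        · intro w
          exact le_trans (degree_filter_le E v w) (hdeg w)
      have hc1 : (degree E v : ℚ) + (E.filter (fun e => v ∉ e)).card = E.card := by
        exact_mod_cast degree_add_card E v
      have hc2 : ((V.erase v).card : ℚ) + 1 = V.card := by
        have h := Finset.card_erase_of_mem hvV
        have hpos : 1 ≤ V.card := Finset.card_pos.mpr ⟨v, hvV⟩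
        exact_mod_cast (by omega : (V.erase v).card + 1 = V.card)
      have hd : (3 : ℚ) ≤ degree E v := by exact_mod_cast hv
      have hstep' : (tau E : ℚ) ≤ (tau (E.filter (fun e => v ∉ e)) : ℚ) + 1 := by
        exact_mod_cast hstep
      linarith
    · push_neg at hex
      have hdeg2 : ∀ v, degree E v ≤ 2 := fun v => by have := hex v; omega
      have h7m : 7 * E.card ≤ 2 * V.card := card_bound V E hVE h7 2 hdeg2
      have hb2 := bound2 V.card V E le_rfl hVE h7 hdeg2
      have h7m' : 7 * (E.card : ℚ) ≤ 2 * V.card := by exact_mod_cast h7m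
      linarith

lemma bound4 : ∀ (k : ℕ) (V : Finset α) (E : Finset (Finset α)), V.card ≤ k →
    (∀ e ∈ E, e ⊆ V) → (∀ e ∈ E, e.card = 7) → (∀ v, degree E v ≤ 4) →
    (tau E : ℚ) ≤ 9/50 * V.card + 41/200 * E.card := by
  intro k
  induction k with
  | zero =>
    intro V E hVk hVE h7 _
    have hV : V = ∅ := Finset.card_eq_zero.mp (Nat.le_zero.mp hVk)
    have hE : E = ∅ := by
      rw [Finset.eq_empty_iff_forall_notMem]
      intro e he
      have h77 := h7 e he
      have h0 : e = ∅ := Finset.subset_empty.mp (hV ▸ hVE e he)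
      simp [h0] at h77
    simp [hV, hE, tau_empty]
  | succ k ih =>
    intro V E hVk hVE h7 hdeg
    by_cases hex : ∃ v, 4 ≤ degree E v
    · obtain ⟨v, hv⟩ := hex
      have hvV : v ∈ V := mem_of_degree_pos hVE (by omega)
      have hstep : tau E ≤ tau (E.filter (fun e => v ∉ e)) + 1 :=
        tau_step E v (edges_nonempty h7)
      have hIH : (tau (E.filter (fun e => v ∉ e)) : ℚ) ≤
          9/50 * (V.erase v).card + 41/200 * (E.filter (fun e => v ∉ e)).card := by
        refine ih (V.erase v) _ ?_ ?_ ?_ ?_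
        · have := Finset.card_erase_of_mem hvV
          omega
        · intro e he
          rw [Finset.mem_filter] at he
          exact Finset.subset_erase.mpr ⟨hVE e he.1, he.2⟩
        · intro e he
          exact h7 e (Finset.mem_filter.mp he).1
        · intro w
          exact le_trans (degree_filter_le E v w) (hdeg w)
      have hc1 : (degree E v : ℚ) + (E.filter (fun e => v ∉ e)).card = E.card := by
        exact_mod_cast degree_add_card E v
      have hc2 : ((V.erase v).card : ℚ) + 1 = V.card := by
        have h := Finset.card_erase_of_mem hvV
        have hpos : 1 ≤ V.card := Finset.card_pos.mpr ⟨v, hvV⟩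
        exact_mod_cast (by omega : (V.erase v).card + 1 = V.card)
      have hd : (4 : ℚ) ≤ degree E v := by exact_mod_cast hv
      have hstep' : (tau E : ℚ) ≤ (tau (E.filter (fun e => v ∉ e)) : ℚ) + 1 := by
        exact_mod_cast hstep
      linarith
    · push_neg at hex
      have hdeg3 : ∀ v, degree E v ≤ 3 := fun v => by have := hex v; omega
      have h7m : 7 * E.card ≤ 3 * V.card := card_bound V E hVE h7 3 hdeg3
      have hb3 := bound3 V.card V E le_rfl hVE h7 hdeg3
      have h7m' : 7 * (E.card : ℚ) ≤ 3 * V.card := by exact_mod_cast h7m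
      linarith

lemma bound5 : ∀ (k : ℕ) (V : Finset α) (E : Finset (Finset α)), V.card ≤ k →
    (∀ e ∈ E, e ⊆ V) → (∀ e ∈ E, e.card = 7) →
    (tau E : ℚ) ≤ 18400/96050 * (V.card + E.card) := by
  intro k
  induction k with
  | zero =>
    intro V E hVk hVE h7
    have hV : V = ∅ := Finset.card_eq_zero.mp (Nat.le_zero.mp hVk)
    have hE : E = ∅ := by
      rw [Finset.eq_empty_iff_forall_notMem]
      intro e he
      have h77 := h7 e he
      have h0 : e = ∅ := Finset.subset_empty.mp (hV ▸ hVE e he)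
      simp [h0] at h77
    simp [hV, hE, tau_empty]
  | succ k ih =>
    intro V E hVk hVE h7
    by_cases hex : ∃ v, 5 ≤ degree E v
    · obtain ⟨v, hv⟩ := hex
      have hvV : v ∈ V := mem_of_degree_pos hVE (by omega)
      have hstep : tau E ≤ tau (E.filter (fun e => v ∉ e)) + 1 :=
        tau_step E v (edges_nonempty h7)
      have hIH : (tau (E.filter (fun e => v ∉ e)) : ℚ) ≤
          18400/96050 * ((V.erase v).card + (E.filter (fun e => v ∉ e)).card) := by
        refine ih (V.erase v) _ ?_ ?_ ?_
        · have := Finset.card_erase_of_mem hvV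
          omega
        · intro e he
          rw [Finset.mem_filter] at he
          exact Finset.subset_erase.mpr ⟨hVE e he.1, he.2⟩
        · intro e he
          exact h7 e (Finset.mem_filter.mp he).1
      have hc1 : (degree E v : ℚ) + (E.filter (fun e => v ∉ e)).card = E.card := by
        exact_mod_cast degree_add_card E v
      have hc2 : ((V.erase v).card : ℚ) + 1 = V.card := by
        have h := Finset.card_erase_of_mem hvV
        have hpos : 1 ≤ V.card := Finset.card_pos.mpr ⟨v, hvV⟩
        exact_mod_cast (by omega : (V.erase v).card + 1 = V.card)
      have hd : (5 : ℚ) ≤ degree E v := by exact_mod_cast hv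
      have hstep' : (tau E : ℚ) ≤ (tau (E.filter (fun e => v ∉ e)) : ℚ) + 1 := by
        exact_mod_cast hstep
      linarith
    · push_neg at hex
      have hdeg4 : ∀ v, degree E v ≤ 4 := fun v => by have := hex v; omega
      have h7m : 7 * E.card ≤ 4 * V.card := card_bound V E hVE h7 4 hdeg4
      have hb4 := bound4 V.card V E le_rfl hVE h7 hdeg4
      have h7m' : 7 * (E.card : ℚ) ≤ 4 * V.card := by exact_mod_cast h7m
      linarith

theorem stmt_1 (V : Finset α) (E : Finset (Finset α))
    (hVE : ∀ e ∈ E, e ⊆ V) (huniform : ∀ e ∈ E, e.card = 7) :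
    (tau E : ℚ) ≤ (18400 / 96050) * (V.card + E.card) ∧
    (18400 / 96050 : ℚ) < 0.1916 := by
  constructor
  · exact bound5 V.card V E le_rfl hVE huniform
  · norm_num
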